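/- arXiv:1703.05353 — 2 statements merged into one kernel-verified Lean document; each statement's English description precedes it below -/
import Mathlib

section
/- Let {φ_j}_{j=1}^{n₁} and {ψ_j}_{j=1}^{n₂} be ETFs for F^{d₁}, F^{d₂} with d₁ = (n₁ − √n₁)/2, d₂ = (n₂ − √n₂)/2, with Naimark complements {φ̃_j}, {ψ̃_j}. Then {(φ_j ⊗ ψ̃_{j'}) ⊕ (φ̃_j ⊗ ψ_{j'})} (over all j, j') is an ETF of n₁n₂ vectors for F^{d₃} where d₃ = (n₁n₂ − √(n₁n₂))/2, and {(φ_j ⊗ ψ_{j'}) ⊕ (φ̃_j ⊗ ψ̃_{j'})} is a Naimark-complementary ETF for F^{n₁n₂ − d₃}. -/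
lemma star_prod_factor {𝕜 : Type*} [RCLike 𝕜] {m n : Type*} [Fintype m] [Fintype n]
    (f f' : m → 𝕜) (g g' : n → 𝕜) :
    ∑ p : m × n, (starRingEnd 𝕜) (f p.1 * g p.2) * (f' p.1 * g' p.2) =
      (∑ i, (starRingEnd 𝕜) (f i) * f' i) * (∑ j, (starRingEnd 𝕜) (g j) * g' j) := by
  rw [Finset.sum_mul_sum, Fintype.sum_prod_type]
  exact Finset.sum_congr rfl fun i _ => Finset.sum_congr rfl fun j _ => by
    simp only [map_mul]; ring

lemma prod_star_factor {𝕜 : Type*} [RCLike 𝕜] {m n : Type*} [Fintype m] [Fintype n]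
    (f f' : m → 𝕜) (g g' : n → 𝕜) :
    ∑ p : m × n, (f p.1 * g p.2) * star (f' p.1 * g' p.2) =
      (∑ i, f i * star (f' i)) * (∑ j, g j * star (g' j)) := by
  rw [Finset.sum_mul_sum, Fintype.sum_prod_type]
  exact Finset.sum_congr rfl fun i _ => Finset.sum_congr rfl fun j _ => by
    simp [star_mul, mul_comm, mul_left_comm, mul_assoc]

lemma real_prod_factor {m n : Type*} [Fintype m] [Fintype n] (f : m → ℝ) (g : n → ℝ) :
    ∑ p : m × n, f p.1 * g p.2 = (∑ i, f i) * (∑ j, g j) := by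
  rw [Finset.sum_mul_sum, Fintype.sum_prod_type]

lemma mulconj_eq {𝕜 : Type*} [RCLike 𝕜] {m n p : Type*} [Fintype n]
    (A : Matrix m n 𝕜) (B : Matrix p n 𝕜) (a : m) (b : p) :
    ∑ c, A a c * star (B b c) = (A * B.conjTranspose) a b := by
  simp [Matrix.mul_apply, Matrix.conjTranspose_apply]

lemma diag_val {𝕜 : Type*} [RCLike 𝕜] {m : Type*} [Fintype m] (v : m → 𝕜) :
    ∑ i, (starRingEnd 𝕜) (v i) * v i = ((∑ i, ‖v i‖ ^ 2 : ℝ) : 𝕜) := by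
  rw [RCLike.ofReal_sum]
  exact Finset.sum_congr rfl fun i _ => by rw [RCLike.conj_mul]; norm_cast

lemma naimark_col {𝕜 : Type*} [RCLike 𝕜] {d n : ℕ} (hdn : d ≤ n)
    (Φ : Matrix (Fin d) (Fin n) 𝕜) (Φt : Matrix (Fin (n - d)) (Fin n) 𝕜)
    (hΦ : Φ * Φ.conjTranspose = (n : 𝕜) • 1)
    (hΦt : Φt * Φt.conjTranspose = (n : 𝕜) • 1)
    (hc : Φ * Φt.conjTranspose = 0) :
    Φ.conjTranspose * Φ + Φt.conjTranspose * Φt = (n : 𝕜) • 1 := by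
  rcases Nat.eq_zero_or_pos n with hn | hn
  · subst hn
    ext j k; exact j.elim0
  have hn0 : (n : 𝕜) ≠ 0 := Nat.cast_ne_zero.mpr hn.ne'
  have hc' : Φt * Φ.conjTranspose = 0 := by
    have := congrArg Matrix.conjTranspose hc
    simpa [Matrix.conjTranspose_mul] using this
  set M : Matrix (Fin d ⊕ Fin (n - d)) (Fin n) 𝕜 :=
    fun w j => Sum.elim (fun i => Φ i j) (fun i => Φt i j) w with hM
  have hMM : M * M.conjTranspose = (n : 𝕜) • 1 := by
    ext w w'
    rcases w with i | i <;> rcases w' with k | k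
    · have := congrFun (congrFun hΦ i) k
      simp only [Matrix.mul_apply, Matrix.conjTranspose_apply]
      simpa [Matrix.mul_apply, Matrix.conjTranspose_apply, hM, Matrix.one_apply] using this
    · have := congrFun (congrFun hc i) k
      simp only [Matrix.mul_apply, Matrix.conjTranspose_apply]
      simpa [Matrix.mul_apply, Matrix.conjTranspose_apply, hM] using this
    · have := congrFun (congrFun hc' i) k
      simp only [Matrix.mul_apply, Matrix.conjTranspose_apply]
      simpa [Matrix.mul_apply, Matrix.conjTranspose_apply, hM] using this
    · have := congrFun (congrFun hΦt i) k
      simp only [Matrix.mul_apply, Matrix.conjTranspose_apply]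
      simpa [Matrix.mul_apply, Matrix.conjTranspose_apply, hM, Matrix.one_apply] using this
  have e : Fin n ≃ (Fin d ⊕ Fin (n - d)) :=
    (finCongr (Nat.add_sub_cancel' hdn)).symm.trans finSumFinEquiv.symm
  set N : Matrix (Fin n) (Fin n) 𝕜 := M.submatrix e (Equiv.refl _) with hNdef
  have hNN : N * N.conjTranspose = (n : 𝕜) • 1 := by
    have : N * N.conjTranspose = (M * M.conjTranspose).submatrix e e := by
      rw [hNdef, Matrix.conjTranspose_submatrix]
      exact Matrix.submatrix_mul_equiv M M.conjTranspose _ (Equiv.refl _) _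
    rw [this, hMM]
    ext i k
    simp [Matrix.submatrix_apply, Matrix.one_apply]
  have hflip : N.conjTranspose * N = (n : 𝕜) • 1 := by
    have h1 : N * ((n : 𝕜)⁻¹ • N.conjTranspose) = 1 := by
      rw [Matrix.mul_smul, hNN, smul_smul, inv_mul_cancel₀ hn0, one_smul]
    have h2 : ((n : 𝕜)⁻¹ • N.conjTranspose) * N = 1 := mul_eq_one_comm.mp h1
    have h3 : (n : 𝕜) • (((n : 𝕜)⁻¹ • N.conjTranspose) * N) = (n : 𝕜) • 1 :=
      congrArg _ h2
    rwa [Matrix.smul_mul, smul_smul, mul_inv_cancel₀ hn0, one_smul] at h3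
  have hMtM : M.conjTranspose * M = (n : 𝕜) • 1 := by
    have : N.conjTranspose * N = M.conjTranspose * M := by
      rw [hNdef, Matrix.conjTranspose_submatrix]
      exact Matrix.submatrix_mul_equiv M.conjTranspose M (Equiv.refl _) e (Equiv.refl _)
    rwa [this] at hflip
  ext j k
  have := congrFun (congrFun hMtM j) k
  simp only [Matrix.smul_apply, Matrix.mul_apply, Matrix.conjTranspose_apply] at this
  simpa [Matrix.mul_apply, Matrix.conjTranspose_apply, hM, Fintype.sum_sum_type,
    Matrix.add_apply] using this

lemma etf_angle {𝕜 : Type*} [RCLike 𝕜] {d n : ℕ}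
    (hd : (d : ℝ) = ((n : ℝ) - Real.sqrt n) / 2)
    (Φ : Matrix (Fin d) (Fin n) 𝕜)
    (hΦ : Φ * Φ.conjTranspose = (n : 𝕜) • 1)
    (hnorm : ∀ j, ∑ i, ‖Φ i j‖ ^ 2 = (d : ℝ))
    {γ : ℝ}
    (hang : ∀ j j', j ≠ j' → ‖∑ i, (starRingEnd 𝕜) (Φ i j) * Φ i j'‖ = γ)
    {j₀ j₁ : Fin n} (hj : j₀ ≠ j₁) :
    γ = Real.sqrt n / 2 := by
  set g : Fin n → Fin n → 𝕜 := fun j k => ∑ i, (starRingEnd 𝕜) (Φ i j) * Φ i k with hg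
  have hgram : ∀ j k, (Φ.conjTranspose * Φ) j k = g j k := by
    intro j k
    simp [Matrix.mul_apply, Matrix.conjTranspose_apply, hg]
  have hGG : (Φ.conjTranspose * Φ) * (Φ.conjTranspose * Φ).conjTranspose
      = (n : 𝕜) • (Φ.conjTranspose * Φ) := by
    rw [Matrix.conjTranspose_mul, Matrix.conjTranspose_conjTranspose]
    calc Φ.conjTranspose * Φ * (Φ.conjTranspose * Φ)
        = Φ.conjTranspose * (Φ * Φ.conjTranspose) * Φ := by
          rw [Matrix.mul_assoc, Matrix.mul_assoc, Matrix.mul_assoc]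
      _ = (n : 𝕜) • (Φ.conjTranspose * Φ) := by
          rw [hΦ, Matrix.mul_smul, Matrix.mul_one, Matrix.smul_mul]
  have hdiag : ∀ j, g j j = ((d : ℝ) : 𝕜) := by
    intro j
    rw [hg]
    calc ∑ i, (starRingEnd 𝕜) (Φ i j) * Φ i j
        = ∑ i, ((‖Φ i j‖ ^ 2 : ℝ) : 𝕜) := by
          refine Finset.sum_congr rfl fun i _ => ?_
          rw [RCLike.conj_mul]; norm_cast
      _ = ((d : ℝ) : 𝕜) := by rw [← RCLike.ofReal_sum, hnorm j]
  have h1 : ∑ k, ‖g j₀ k‖ ^ 2 = (n : ℝ) * d := by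
    have := congrFun (congrFun hGG j₀) j₀
    rw [Matrix.mul_apply, Matrix.smul_apply, hgram, hdiag] at this
    have h2 : ∀ k, (Φ.conjTranspose * Φ) j₀ k *
        (Φ.conjTranspose * Φ).conjTranspose k j₀ = ((‖g j₀ k‖ ^ 2 : ℝ) : 𝕜) := by
      intro k
      simp only [Matrix.conjTranspose_apply, hgram]
      rw [RCLike.star_def, RCLike.mul_conj]; norm_cast
    rw [Finset.sum_congr rfl fun k _ => h2 k, ← RCLike.ofReal_sum] at this
    have : ((∑ k, ‖g j₀ k‖ ^ 2 : ℝ) : 𝕜) = (((n : ℝ) * d : ℝ) : 𝕜) := by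
      rw [this, smul_eq_mul]; push_cast; ring
    exact_mod_cast this
  have hsplit : ∑ k, ‖g j₀ k‖ ^ 2 = (d : ℝ) ^ 2 + ((n : ℝ) - 1) * γ ^ 2 := by
    rw [← Finset.add_sum_erase _ _ (Finset.mem_univ j₀)]
    congr 1
    · rw [hdiag]
      rw [RCLike.norm_ofReal, abs_of_nonneg (by positivity)]
    · rw [Finset.sum_congr rfl fun k hk => by
        rw [hang j₀ k (Ne.symm (Finset.ne_of_mem_erase hk))],
        Finset.sum_const, Finset.card_erase_of_mem (Finset.mem_univ j₀),
        Finset.card_univ, Fintype.card_fin, nsmul_eq_mul]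
      have hn1 : 1 ≤ n := Nat.one_le_iff_ne_zero.mpr (by rintro rfl; exact j₀.elim0)
      rw [Nat.cast_sub hn1, Nat.cast_one]
  have hs : Real.sqrt n ^ 2 = (n : ℝ) := Real.sq_sqrt (Nat.cast_nonneg n)
  have hn2 : (2 : ℝ) ≤ n := by
    have : 2 ≤ n := by
      by_contra h
      push_neg at h
      interval_cases n
      · exact j₀.elim0
      · exact hj (Subsingleton.elim j₀ j₁)
    exact_mod_cast this
  have hγ2 : γ ^ 2 = (n : ℝ) / 4 := by
    have key : ((n : ℝ) - 1) * γ ^ 2 = (n : ℝ) * ((n : ℝ) - 1) / 4 := by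
      nlinarith [h1, hsplit, hs]
    have : (n : ℝ) - 1 ≠ 0 := by linarith
    field_simp at key
    nlinarith [key]
  have hγ0 : 0 ≤ γ := by rw [← hang j₀ j₁ hj]; positivity
  nlinarith [hγ2, hs, Real.sqrt_nonneg (n : ℝ), sq_nonneg (γ - Real.sqrt n / 2),
    sq_nonneg (γ + Real.sqrt n / 2)]

/-- **Tensor products of ETFs.**  Let `{φ_j}` and `{ψ_j}` be ETFs for `𝕜^{d₁}`, `𝕜^{d₂}`
with `d₁ = (n₁ − √n₁)/2`, `d₂ = (n₂ − √n₂)/2`, normalized so that `Φ Φ* = n₁ • 1`,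
`Φ̃ Φ̃* = n₁ • 1`, `Φ Φ̃* = 0` for a Naimark complement `Φ̃` (similarly for `Ψ`).  Then
`{(φ_j ⊗ ψ̃_{j'}) ⊕ (φ̃_j ⊗ ψ_{j'})}` is an ETF of `n₁ n₂` vectors for `𝕜^{d₃}`,
`d₃ = (n₁n₂ − √(n₁n₂))/2`, and `{(φ_j ⊗ ψ_{j'}) ⊕ (φ̃_j ⊗ ψ̃_{j'})}` is a
Naimark-complementary ETF for `𝕜^{n₁n₂ − d₃}`. -/
theorem tensor_etf {𝕜 : Type*} [RCLike 𝕜] (d₁ d₂ n₁ n₂ : ℕ)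
    (hd₁ : (d₁ : ℝ) = ((n₁ : ℝ) - Real.sqrt n₁) / 2)
    (hd₂ : (d₂ : ℝ) = ((n₂ : ℝ) - Real.sqrt n₂) / 2)
    (Φ : Matrix (Fin d₁) (Fin n₁) 𝕜) (Φt : Matrix (Fin (n₁ - d₁)) (Fin n₁) 𝕜)
    (Ψ : Matrix (Fin d₂) (Fin n₂) 𝕜) (Ψt : Matrix (Fin (n₂ - d₂)) (Fin n₂) 𝕜)
    (hΦ : Φ * Φ.conjTranspose = (n₁ : 𝕜) • 1)
    (hΦt : Φt * Φt.conjTranspose = (n₁ : 𝕜) • 1)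
    (hΦΦt : Φ * Φt.conjTranspose = 0)
    (hΦnorm : ∀ j, ∑ i, ‖Φ i j‖ ^ 2 = (d₁ : ℝ))
    (hΦtnorm : ∀ j, ∑ i, ‖Φt i j‖ ^ 2 = (n₁ : ℝ) - d₁)
    (hΦang : ∃ γ : ℝ, ∀ j j', j ≠ j' → ‖∑ i, (starRingEnd 𝕜) (Φ i j) * Φ i j'‖ = γ)
    (hΨ : Ψ * Ψ.conjTranspose = (n₂ : 𝕜) • 1)
    (hΨt : Ψt * Ψt.conjTranspose = (n₂ : 𝕜) • 1)
    (hΨΨt : Ψ * Ψt.conjTranspose = 0)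
    (hΨnorm : ∀ j, ∑ i, ‖Ψ i j‖ ^ 2 = (d₂ : ℝ))
    (hΨtnorm : ∀ j, ∑ i, ‖Ψt i j‖ ^ 2 = (n₂ : ℝ) - d₂)
    (hΨang : ∃ γ : ℝ, ∀ j j', j ≠ j' → ‖∑ i, (starRingEnd 𝕜) (Ψ i j) * Ψ i j'‖ = γ) :
    (let Θ : Matrix ((Fin d₁ × Fin (n₂ - d₂)) ⊕ (Fin (n₁ - d₁) × Fin d₂))
        (Fin n₁ × Fin n₂) 𝕜 := fun w c =>
          match w with
          | Sum.inl (a, e) => Φ a c.1 * Ψt e c.2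
          | Sum.inr (a, e) => Φt a c.1 * Ψ e c.2
     let Θ' : Matrix ((Fin d₁ × Fin d₂) ⊕ (Fin (n₁ - d₁) × Fin (n₂ - d₂)))
        (Fin n₁ × Fin n₂) 𝕜 := fun w c =>
          match w with
          | Sum.inl (a, e) => Φ a c.1 * Ψ e c.2
          | Sum.inr (a, e) => Φt a c.1 * Ψt e c.2
     ((d₁ * (n₂ - d₂) + (n₁ - d₁) * d₂ : ℕ) : ℝ) =
        ((n₁ * n₂ : ℕ) - Real.sqrt (n₁ * n₂ : ℕ)) / 2 ∧
     Θ * Θ.conjTranspose = ((n₁ * n₂ : ℕ) : 𝕜) • 1 ∧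
     Θ' * Θ'.conjTranspose = ((n₁ * n₂ : ℕ) : 𝕜) • 1 ∧
     Θ * Θ'.conjTranspose = 0 ∧
     (∀ c, ∑ w, ‖Θ w c‖ ^ 2 = ((d₁ * (n₂ - d₂) + (n₁ - d₁) * d₂ : ℕ) : ℝ)) ∧
     (∃ γ : ℝ, ∀ c c', c ≠ c' → ‖∑ w, (starRingEnd 𝕜) (Θ w c) * Θ w c'‖ = γ) ∧
     (∃ γ : ℝ, ∀ c c', c ≠ c' → ‖∑ w, (starRingEnd 𝕜) (Θ' w c) * Θ' w c'‖ = γ)) := by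
  intro Θ Θ'
  have hs1 : (0 : ℝ) ≤ Real.sqrt n₁ := Real.sqrt_nonneg _
  have hs2 : (0 : ℝ) ≤ Real.sqrt n₂ := Real.sqrt_nonneg _
  have hn1 : (0 : ℝ) ≤ (n₁ : ℝ) := Nat.cast_nonneg _
  have hn2 : (0 : ℝ) ≤ (n₂ : ℝ) := Nat.cast_nonneg _
  have hd1n : d₁ ≤ n₁ := by
    have : (d₁ : ℝ) ≤ (n₁ : ℝ) := by rw [hd₁]; linarith
    exact_mod_cast this
  have hd2n : d₂ ≤ n₂ := by
    have : (d₂ : ℝ) ≤ (n₂ : ℝ) := by rw [hd₂]; linarith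
    exact_mod_cast this
  have hΦtΦ : Φt * Φ.conjTranspose = 0 := by
    have := congrArg Matrix.conjTranspose hΦΦt
    simpa [Matrix.conjTranspose_mul] using this
  have hΨtΨ : Ψt * Ψ.conjTranspose = 0 := by
    have := congrArg Matrix.conjTranspose hΨΨt
    simpa [Matrix.conjTranspose_mul] using this
  obtain ⟨γΦ, hγΦ0⟩ := hΦang
  obtain ⟨γΨ, hγΨ0⟩ := hΨang
  have hγΦ : ∀ j k, j ≠ k → ‖∑ i, (starRingEnd 𝕜) (Φ i j) * Φ i k‖ = Real.sqrt n₁ / 2 :=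
    fun j k h => by rw [hγΦ0 j k h]; exact etf_angle hd₁ Φ hΦ hΦnorm hγΦ0 h
  have hγΨ : ∀ j k, j ≠ k → ‖∑ i, (starRingEnd 𝕜) (Ψ i j) * Ψ i k‖ = Real.sqrt n₂ / 2 :=
    fun j k h => by rw [hγΨ0 j k h]; exact etf_angle hd₂ Ψ hΨ hΨnorm hγΨ0 h
  have hdΦ : ∀ j, ∑ i, (starRingEnd 𝕜) (Φ i j) * Φ i j = ((d₁ : ℝ) : 𝕜) :=
    fun j => by rw [diag_val, hΦnorm j]
  have hdΦt : ∀ j, ∑ i, (starRingEnd 𝕜) (Φt i j) * Φt i j = (((n₁ : ℝ) - d₁ : ℝ) : 𝕜) :=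
    fun j => by rw [diag_val, hΦtnorm j]
  have hdΨ : ∀ j, ∑ i, (starRingEnd 𝕜) (Ψ i j) * Ψ i j = ((d₂ : ℝ) : 𝕜) :=
    fun j => by rw [diag_val, hΨnorm j]
  have hdΨt : ∀ j, ∑ i, (starRingEnd 𝕜) (Ψt i j) * Ψt i j = (((n₂ : ℝ) - d₂ : ℝ) : 𝕜) :=
    fun j => by rw [diag_val, hΨtnorm j]
  have hnegΦ : ∀ j k, j ≠ k → ∑ i, (starRingEnd 𝕜) (Φt i j) * Φt i k
      = - ∑ i, (starRingEnd 𝕜) (Φ i j) * Φ i k := by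
    intro j k hjk
    have h := congrFun (congrFun (naimark_col hd1n Φ Φt hΦ hΦt hΦΦt) j) k
    simp only [Matrix.add_apply, Matrix.mul_apply, Matrix.conjTranspose_apply,
      Matrix.smul_apply, Matrix.one_apply, if_neg hjk, smul_zero, RCLike.star_def] at h
    exact eq_neg_of_add_eq_zero_right h
  have hnegΨ : ∀ j k, j ≠ k → ∑ i, (starRingEnd 𝕜) (Ψt i j) * Ψt i k
      = - ∑ i, (starRingEnd 𝕜) (Ψ i j) * Ψ i k := by
    intro j k hjk
    have h := congrFun (congrFun (naimark_col hd2n Ψ Ψt hΨ hΨt hΨΨt) j) k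
    simp only [Matrix.add_apply, Matrix.mul_apply, Matrix.conjTranspose_apply,
      Matrix.smul_apply, Matrix.one_apply, if_neg hjk, smul_zero, RCLike.star_def] at h
    exact eq_neg_of_add_eq_zero_right h
  have hrΦ : ((Real.sqrt n₁ : ℝ) : 𝕜) = (n₁ : 𝕜) - 2 * (d₁ : 𝕜) := by
    have h : Real.sqrt n₁ = (n₁ : ℝ) - 2 * d₁ := by linarith
    rw [h]; push_cast; ring
  have hrΨ : ((Real.sqrt n₂ : ℝ) : 𝕜) = (n₂ : 𝕜) - 2 * (d₂ : 𝕜) := by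
    have h : Real.sqrt n₂ = (n₂ : ℝ) - 2 * d₂ := by linarith
    rw [h]; push_cast; ring
  have hsplit : ∀ c c' : Fin n₁ × Fin n₂, ∑ w, (starRingEnd 𝕜) (Θ w c) * Θ w c' =
      (∑ i, (starRingEnd 𝕜) (Φ i c.1) * Φ i c'.1) *
        (∑ i, (starRingEnd 𝕜) (Ψt i c.2) * Ψt i c'.2)
      + (∑ i, (starRingEnd 𝕜) (Φt i c.1) * Φt i c'.1) *
        (∑ i, (starRingEnd 𝕜) (Ψ i c.2) * Ψ i c'.2) := by
    intro c c'
    rw [Fintype.sum_sum_type]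
    congr 1
    · rw [show (fun p : Fin d₁ × Fin (n₂ - d₂) => (starRingEnd 𝕜) (Θ (Sum.inl p) c) * Θ (Sum.inl p) c') = (fun p : Fin d₁ × Fin (n₂ - d₂) => (starRingEnd 𝕜) (Φ p.1 c.1 * Ψt p.2 c.2) * (Φ p.1 c'.1 * Ψt p.2 c'.2)) from rfl]
      exact star_prod_factor (fun a => Φ a c.1) (fun a => Φ a c'.1) (fun b => Ψt b c.2) (fun b => Ψt b c'.2)
    · rw [show (fun p : Fin (n₁ - d₁) × Fin d₂ => (starRingEnd 𝕜) (Θ (Sum.inr p) c) * Θ (Sum.inr p) c') = (fun p : Fin (n₁ - d₁) × Fin d₂ => (starRingEnd 𝕜) (Φt p.1 c.1 * Ψ p.2 c.2) * (Φt p.1 c'.1 * Ψ p.2 c'.2)) from rfl]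
      exact star_prod_factor (fun a => Φt a c.1) (fun a => Φt a c'.1) (fun b => Ψ b c.2) (fun b => Ψ b c'.2)
  have hsplit' : ∀ c c' : Fin n₁ × Fin n₂, ∑ w, (starRingEnd 𝕜) (Θ' w c) * Θ' w c' =
      (∑ i, (starRingEnd 𝕜) (Φ i c.1) * Φ i c'.1) *
        (∑ i, (starRingEnd 𝕜) (Ψ i c.2) * Ψ i c'.2)
      + (∑ i, (starRingEnd 𝕜) (Φt i c.1) * Φt i c'.1) *
        (∑ i, (starRingEnd 𝕜) (Ψt i c.2) * Ψt i c'.2) := by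
    intro c c'
    rw [Fintype.sum_sum_type]
    congr 1
    · rw [show (fun p : Fin d₁ × Fin d₂ => (starRingEnd 𝕜) (Θ' (Sum.inl p) c) * Θ' (Sum.inl p) c') = (fun p : Fin d₁ × Fin d₂ => (starRingEnd 𝕜) (Φ p.1 c.1 * Ψ p.2 c.2) * (Φ p.1 c'.1 * Ψ p.2 c'.2)) from rfl]
      exact star_prod_factor (fun a => Φ a c.1) (fun a => Φ a c'.1) (fun b => Ψ b c.2) (fun b => Ψ b c'.2)
    · rw [show (fun p : Fin (n₁ - d₁) × Fin (n₂ - d₂) => (starRingEnd 𝕜) (Θ' (Sum.inr p) c) * Θ' (Sum.inr p) c') = (fun p : Fin (n₁ - d₁) × Fin (n₂ - d₂) => (starRingEnd 𝕜) (Φt p.1 c.1 * Ψt p.2 c.2) * (Φt p.1 c'.1 * Ψt p.2 c'.2)) from rfl]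
      exact star_prod_factor (fun a => Φt a c.1) (fun a => Φt a c'.1) (fun b => Ψt b c.2) (fun b => Ψt b c'.2)
  refine ⟨?_, ?_, ?_, ?_, ?_, ?_, ?_⟩
  · -- dimension count
    push_cast [Nat.cast_sub hd1n, Nat.cast_sub hd2n]
    rw [Real.sqrt_mul hn1]
    rw [hd₁, hd₂]; ring
  · -- Θ Θᴴ
    ext w w'
    rcases w with ⟨a, e⟩ | ⟨a, e⟩ <;> rcases w' with ⟨a', e'⟩ | ⟨a', e'⟩
    · have key := prod_star_factor (Φ a) (Φ a') (Ψt e) (Ψt e')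
      rw [mulconj_eq, mulconj_eq, hΦ, hΨt] at key
      refine Eq.trans (show _ = ∑ p : Fin n₁ × Fin n₂,
        (Φ a p.1 * Ψt e p.2) * star (Φ a' p.1 * Ψt e' p.2) from rfl) (key.trans ?_)
      by_cases h1 : a = a' <;> by_cases h2 : e = e' <;>
        simp [Matrix.smul_apply, Matrix.one_apply, h1, h2, Prod.ext_iff] <;>
        push_cast <;> ring
    · have key := prod_star_factor (Φ a) (Φt a') (Ψt e) (Ψ e')
      rw [mulconj_eq, mulconj_eq, hΦΦt] at key
      refine Eq.trans (show _ = ∑ p : Fin n₁ × Fin n₂,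
        (Φ a p.1 * Ψt e p.2) * star (Φt a' p.1 * Ψ e' p.2) from rfl) (key.trans ?_)
      simp [Matrix.smul_apply, Matrix.one_apply]
    · have key := prod_star_factor (Φt a) (Φ a') (Ψ e) (Ψt e')
      rw [mulconj_eq, mulconj_eq, hΦtΦ] at key
      refine Eq.trans (show _ = ∑ p : Fin n₁ × Fin n₂,
        (Φt a p.1 * Ψ e p.2) * star (Φ a' p.1 * Ψt e' p.2) from rfl) (key.trans ?_)
      simp [Matrix.smul_apply, Matrix.one_apply]
    · have key := prod_star_factor (Φt a) (Φt a') (Ψ e) (Ψ e')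
      rw [mulconj_eq, mulconj_eq, hΦt, hΨ] at key
      refine Eq.trans (show _ = ∑ p : Fin n₁ × Fin n₂,
        (Φt a p.1 * Ψ e p.2) * star (Φt a' p.1 * Ψ e' p.2) from rfl) (key.trans ?_)
      by_cases h1 : a = a' <;> by_cases h2 : e = e' <;>
        simp [Matrix.smul_apply, Matrix.one_apply, h1, h2, Prod.ext_iff] <;>
        push_cast <;> ring
  · -- Θ' Θ'ᴴ
    ext w w'
    rcases w with ⟨a, e⟩ | ⟨a, e⟩ <;> rcases w' with ⟨a', e'⟩ | ⟨a', e'⟩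
    · have key := prod_star_factor (Φ a) (Φ a') (Ψ e) (Ψ e')
      rw [mulconj_eq, mulconj_eq, hΦ, hΨ] at key
      refine Eq.trans (show _ = ∑ p : Fin n₁ × Fin n₂,
        (Φ a p.1 * Ψ e p.2) * star (Φ a' p.1 * Ψ e' p.2) from rfl) (key.trans ?_)
      by_cases h1 : a = a' <;> by_cases h2 : e = e' <;>
        simp [Matrix.smul_apply, Matrix.one_apply, h1, h2, Prod.ext_iff] <;>
        push_cast <;> ring
    · have key := prod_star_factor (Φ a) (Φt a') (Ψ e) (Ψt e')
      rw [mulconj_eq, mulconj_eq, hΦΦt] at key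
      refine Eq.trans (show _ = ∑ p : Fin n₁ × Fin n₂,
        (Φ a p.1 * Ψ e p.2) * star (Φt a' p.1 * Ψt e' p.2) from rfl) (key.trans ?_)
      simp [Matrix.smul_apply, Matrix.one_apply]
    · have key := prod_star_factor (Φt a) (Φ a') (Ψt e) (Ψ e')
      rw [mulconj_eq, mulconj_eq, hΦtΦ] at key
      refine Eq.trans (show _ = ∑ p : Fin n₁ × Fin n₂,
        (Φt a p.1 * Ψt e p.2) * star (Φ a' p.1 * Ψ e' p.2) from rfl) (key.trans ?_)
      simp [Matrix.smul_apply, Matrix.one_apply]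
    · have key := prod_star_factor (Φt a) (Φt a') (Ψt e) (Ψt e')
      rw [mulconj_eq, mulconj_eq, hΦt, hΨt] at key
      refine Eq.trans (show _ = ∑ p : Fin n₁ × Fin n₂,
        (Φt a p.1 * Ψt e p.2) * star (Φt a' p.1 * Ψt e' p.2) from rfl) (key.trans ?_)
      by_cases h1 : a = a' <;> by_cases h2 : e = e' <;>
        simp [Matrix.smul_apply, Matrix.one_apply, h1, h2, Prod.ext_iff] <;>
        push_cast <;> ring
  · -- Θ Θ'ᴴ
    ext w w'
    rcases w with ⟨a, e⟩ | ⟨a, e⟩ <;> rcases w' with ⟨a', e'⟩ | ⟨a', e'⟩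
    · have key := prod_star_factor (Φ a) (Φ a') (Ψt e) (Ψ e')
      rw [mulconj_eq, mulconj_eq, hΨtΨ] at key
      refine Eq.trans (show _ = ∑ p : Fin n₁ × Fin n₂,
        (Φ a p.1 * Ψt e p.2) * star (Φ a' p.1 * Ψ e' p.2) from rfl) (key.trans ?_)
      simp [Matrix.smul_apply, Matrix.one_apply]
    · have key := prod_star_factor (Φ a) (Φt a') (Ψt e) (Ψt e')
      rw [mulconj_eq, mulconj_eq, hΦΦt] at key
      refine Eq.trans (show _ = ∑ p : Fin n₁ × Fin n₂,
        (Φ a p.1 * Ψt e p.2) * star (Φt a' p.1 * Ψt e' p.2) from rfl) (key.trans ?_)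
      simp [Matrix.smul_apply, Matrix.one_apply]
    · have key := prod_star_factor (Φt a) (Φ a') (Ψ e) (Ψ e')
      rw [mulconj_eq, mulconj_eq, hΦtΦ] at key
      refine Eq.trans (show _ = ∑ p : Fin n₁ × Fin n₂,
        (Φt a p.1 * Ψ e p.2) * star (Φ a' p.1 * Ψ e' p.2) from rfl) (key.trans ?_)
      simp [Matrix.smul_apply, Matrix.one_apply]
    · have key := prod_star_factor (Φt a) (Φt a') (Ψ e) (Ψt e')
      rw [mulconj_eq, mulconj_eq, hΨΨt] at key
      refine Eq.trans (show _ = ∑ p : Fin n₁ × Fin n₂,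
        (Φt a p.1 * Ψ e p.2) * star (Φt a' p.1 * Ψt e' p.2) from rfl) (key.trans ?_)
      simp [Matrix.smul_apply, Matrix.one_apply]
  · -- column norms
    intro c
    have k1 := real_prod_factor (fun a => ‖Φ a c.1‖ ^ 2) (fun b => ‖Ψt b c.2‖ ^ 2)
    rw [hΦnorm, hΨtnorm] at k1
    have k2 := real_prod_factor (fun a => ‖Φt a c.1‖ ^ 2) (fun b => ‖Ψ b c.2‖ ^ 2)
    rw [hΦtnorm, hΨnorm] at k2
    have e1 : ∑ p : Fin d₁ × Fin (n₂ - d₂), ‖Θ (Sum.inl p) c‖ ^ 2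
        = (d₁ : ℝ) * ((n₂ : ℝ) - d₂) := by
      rw [← k1]
      exact Finset.sum_congr rfl fun p _ => by
        show ‖Φ p.1 c.1 * Ψt p.2 c.2‖ ^ 2 = _
        rw [norm_mul, mul_pow]
    have e2 : ∑ p : Fin (n₁ - d₁) × Fin d₂, ‖Θ (Sum.inr p) c‖ ^ 2
        = ((n₁ : ℝ) - d₁) * (d₂ : ℝ) := by
      rw [← k2]
      exact Finset.sum_congr rfl fun p _ => by
        show ‖Φt p.1 c.1 * Ψ p.2 c.2‖ ^ 2 = _
        rw [norm_mul, mul_pow]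
    rw [Fintype.sum_sum_type, e1, e2]
    push_cast [Nat.cast_sub hd1n, Nat.cast_sub hd2n]
    ring
  · -- Θ equiangular
    refine ⟨Real.sqrt n₁ * Real.sqrt n₂ / 2, ?_⟩
    rintro ⟨j, j'⟩ ⟨k, k'⟩ hne
    by_cases hj : j = k
    · subst hj
      have hj' : j' ≠ k' := by rintro rfl; exact hne rfl
      have e1 : (∑ w, (starRingEnd 𝕜) (Θ w (j, j')) * Θ w (j, k')) =
          ((Real.sqrt n₁ : ℝ) : 𝕜) * ∑ i, (starRingEnd 𝕜) (Ψ i j') * Ψ i k' := by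
        rw [hsplit]
        dsimp only
        rw [hdΦ, hdΦt, hnegΨ j' k' hj', hrΦ]
        push_cast
        ring
      rw [e1, norm_mul, RCLike.norm_ofReal, abs_of_nonneg hs1, hγΨ j' k' hj']
      ring
    · by_cases hj' : j' = k'
      · subst hj'
        have e1 : (∑ w, (starRingEnd 𝕜) (Θ w (j, j')) * Θ w (k, j')) =
            ((Real.sqrt n₂ : ℝ) : 𝕜) * ∑ i, (starRingEnd 𝕜) (Φ i j) * Φ i k := by
          rw [hsplit]
          dsimp only
          rw [hdΨ, hdΨt, hnegΦ j k hj, hrΨ]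
          push_cast
          ring
        rw [e1, norm_mul, RCLike.norm_ofReal, abs_of_nonneg hs2, hγΦ j k hj]
        ring
      · have e1 : (∑ w, (starRingEnd 𝕜) (Θ w (j, j')) * Θ w (k, k')) =
            -(2 * ((∑ i, (starRingEnd 𝕜) (Φ i j) * Φ i k) *
              (∑ i, (starRingEnd 𝕜) (Ψ i j') * Ψ i k'))) := by
          rw [hsplit]
          dsimp only
          rw [hnegΦ j k hj, hnegΨ j' k' hj']
          ring
        rw [e1, norm_neg, norm_mul, norm_mul, hγΦ j k hj, hγΨ j' k' hj',
          RCLike.norm_two]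
        ring
  · -- Θ' equiangular
    refine ⟨Real.sqrt n₁ * Real.sqrt n₂ / 2, ?_⟩
    rintro ⟨j, j'⟩ ⟨k, k'⟩ hne
    by_cases hj : j = k
    · subst hj
      have hj' : j' ≠ k' := by rintro rfl; exact hne rfl
      have e1 : (∑ w, (starRingEnd 𝕜) (Θ' w (j, j')) * Θ' w (j, k')) =
          -(((Real.sqrt n₁ : ℝ) : 𝕜) * ∑ i, (starRingEnd 𝕜) (Ψ i j') * Ψ i k') := by
        rw [hsplit']
        dsimp only
        rw [hdΦ, hdΦt, hnegΨ j' k' hj', hrΦ]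
        push_cast
        ring
      rw [e1, norm_neg, norm_mul, RCLike.norm_ofReal, abs_of_nonneg hs1, hγΨ j' k' hj']
      ring
    · by_cases hj' : j' = k'
      · subst hj'
        have e1 : (∑ w, (starRingEnd 𝕜) (Θ' w (j, j')) * Θ' w (k, j')) =
            -(((Real.sqrt n₂ : ℝ) : 𝕜) * ∑ i, (starRingEnd 𝕜) (Φ i j) * Φ i k) := by
          rw [hsplit']
          dsimp only
          rw [hdΨ, hdΨt, hnegΦ j k hj, hrΨ]
          push_cast
          ring
        rw [e1, norm_neg, norm_mul, RCLike.norm_ofReal, abs_of_nonneg hs2, hγΦ j k hj]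
        ring
      · have e1 : (∑ w, (starRingEnd 𝕜) (Θ' w (j, j')) * Θ' w (k, k')) =
            2 * ((∑ i, (starRingEnd 𝕜) (Φ i j) * Φ i k) *
              (∑ i, (starRingEnd 𝕜) (Ψ i j') * Ψ i k')) := by
          rw [hsplit']
          dsimp only
          rw [hnegΦ j k hj, hnegΨ j' k' hj']
          ring
        rw [e1, norm_mul, norm_mul, hγΦ j k hj, hγΨ j' k' hj', RCLike.norm_two]
        ring
end

section
/- If {φ_j}_{j=1}^n is a flat ETF for F^d with 1 < d < n−1, then n ≤ d² − d + 1 when F = C, and n ≤ d(d−1)/2 + 1 when F = R. Moreover, if the ETF is (complex) Hadamard then additionally n ≤ (n−d)² − (n−d) + 1 (complex case) and n ≤ (n−d)(n−d−1)/2 + 1 (real case), i.e., d + √d + 1 ≤ n (complex) and d + sqrt(2d + 1/4) + 3/2 ≤ n (real). -/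
open Finset Matrix

variable {𝕜 : Type} [RCLike 𝕜]

lemma card_upper (d : ℕ) :
    Fintype.card {p : Fin d × Fin d // p.1 < p.2} = d.choose 2 := by
  have e : {p : Fin d × Fin d // p.1 < p.2} ≃ (Σ i : Fin d, Fin i.val) :=
    { toFun := fun p => ⟨p.1.2, ⟨p.1.1, p.2⟩⟩
      invFun := fun q => ⟨(⟨q.2.1, q.2.2.trans q.1.2⟩, q.1), q.2.2⟩
      left_inv := fun p => rfl
      right_inv := fun q => rfl }
  rw [Fintype.card_congr e, Fintype.card_sigma]
  simp only [Fintype.card_fin]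
  rw [Fin.sum_univ_eq_sum_range (fun i => i), Finset.sum_range_id, Nat.choose_two_right]

lemma etf_card_le (d n : ℕ) (hd : 2 ≤ d) (hn : d + 2 ≤ n)
    (Φ : Matrix (Fin d) (Fin n) 𝕜)
    (hflat : ∀ i j, ‖Φ i j‖ = 1)
    (α : ℝ) (hΦ : Φ * Φ.conjTranspose = (α : 𝕜) • 1)
    (γ : ℝ) (hγ : ∀ j j', j ≠ j' → ‖∑ i, star (Φ i j) * Φ i j'‖ = γ) :
    n ≤ Module.finrank ℝ 𝕜 * d.choose 2 + 1 := by
  classical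
  have hd0 : 0 < d := by omega
  have hn0 : 0 < n := by omega
  set g : Matrix (Fin n) (Fin n) 𝕜 := Φ.conjTranspose * Φ with hgdef
  have hge : ∀ j j', g j j' = ∑ i, star (Φ i j) * Φ i j' := by
    intro j j'
    simp [hgdef, Matrix.mul_apply, Matrix.conjTranspose_apply]
  have hunit : ∀ (i : Fin d) (j : Fin n), star (Φ i j) * Φ i j = 1 := by
    intro i j
    rw [RCLike.star_def, RCLike.conj_mul, hflat, RCLike.ofReal_one, one_pow]
  have hunit' : ∀ (i : Fin d) (j : Fin n), Φ i j * star (Φ i j) = 1 := by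
    intro i j; rw [mul_comm]; exact hunit i j
  have hgdiag : ∀ j, g j j = (d : 𝕜) := by
    intro j
    rw [hge, Finset.sum_congr rfl fun i _ => hunit i j]
    simp
  have hgstar : ∀ j j', star (g j j') = ∑ i, Φ i j * star (Φ i j') := by
    intro j j'
    rw [hge, star_sum]
    exact Finset.sum_congr rfl fun i _ => by rw [star_mul', star_star, mul_comm]
  have hsym : ∀ j j', g j' j = star (g j j') := by
    intro j j'
    rw [hgstar, hge]
    exact Finset.sum_congr rfl fun i _ => mul_comm _ _
  -- value of α
  have hαn : α = n := by
    have hdiag : ∀ i, (Φ * Φ.conjTranspose) i i = (n : 𝕜) := by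
      intro i
      rw [Matrix.mul_apply]
      have h : ∀ j : Fin n, Φ i j * Φ.conjTranspose j i = 1 := by
        intro j
        rw [Matrix.conjTranspose_apply]
        exact hunit' i j
      rw [Finset.sum_congr rfl fun j _ => h j]
      simp
    have h1 : (Φ * Φ.conjTranspose).trace = ((n : 𝕜) * d) := by
      rw [Matrix.trace]
      simp only [Matrix.diag_apply]
      rw [Finset.sum_congr rfl fun i _ => hdiag i]
      simp [mul_comm]
    rw [hΦ, Matrix.trace_smul, Matrix.trace_one] at h1
    have hdne : ((d : ℕ) : 𝕜) ≠ 0 := Nat.cast_ne_zero.mpr (by omega)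
    have h2 : (α : 𝕜) * d = (n : 𝕜) * d := by
      simpa [smul_eq_mul, Fintype.card_fin] using h1
    have h3 : (α : 𝕜) = ((n : ℕ) : 𝕜) := mul_right_cancel₀ hdne h2
    have := congrArg (RCLike.re (K := 𝕜)) h3
    simpa using this
  -- Gram squared identity
  have hgg : g * g = (α : 𝕜) • g := by
    rw [hgdef, Matrix.mul_assoc, ← Matrix.mul_assoc Φ Φ.conjTranspose Φ, hΦ,
      Matrix.smul_mul, Matrix.one_mul, Matrix.mul_smul]
  have hkey : (d : ℝ)^2 + ((n : ℝ) - 1) * γ^2 = (n : ℝ) * d := by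
    set k : Fin n := ⟨0, hn0⟩
    have e1 : (g * g) k k = ((∑ j, ‖g k j‖^2 : ℝ) : 𝕜) := by
      rw [Matrix.mul_apply, RCLike.ofReal_sum]
      refine Finset.sum_congr rfl fun j _ => ?_
      rw [hsym k j]
      simp only [RCLike.star_def]
      rw [RCLike.mul_conj, ← RCLike.ofReal_pow]
    have e2 : ((α : 𝕜) • g) k k = ((α * d : ℝ) : 𝕜) := by
      rw [Matrix.smul_apply, hgdiag, smul_eq_mul]
      push_cast
      ring
    have e3 : (∑ j, ‖g k j‖^2 : ℝ) = α * d := by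
      rw [← RCLike.ofReal_inj (K := 𝕜), ← e1, hgg, e2]
    have e4 : (∑ j, ‖g k j‖^2 : ℝ)
        = (∑ j ∈ Finset.univ.erase k, γ^2) + (d:ℝ)^2 := by
      rw [← Finset.sum_erase_add Finset.univ _ (Finset.mem_univ k)]
      congr 1
      · refine Finset.sum_congr rfl fun j hj => ?_
        have hjk : k ≠ j := fun h => (Finset.mem_erase.mp hj).1 h.symm
        rw [← hγ k j hjk, ← hge]
      · rw [hgdiag, RCLike.norm_natCast]
    rw [e4, Finset.sum_const, Finset.card_erase_of_mem (Finset.mem_univ k),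
      Finset.card_univ, Fintype.card_fin, nsmul_eq_mul, hαn] at e3
    push_cast [Nat.cast_sub hn0] at e3 ⊢
    linarith
  have hγsq : γ^2 < (d : ℝ)^2 := by
    have hdn : (d : ℝ) + 2 ≤ (n : ℝ) := by exact_mod_cast hn
    have hd2 : (2 : ℝ) ≤ (d : ℝ) := by exact_mod_cast hd
    by_contra hcon
    push_neg at hcon
    have h5 : ((n:ℝ) - 1) * (d:ℝ)^2 ≤ ((n:ℝ) - 1) * γ^2 :=
      mul_le_mul_of_nonneg_left hcon (by linarith)
    nlinarith [h5, hkey, hd2, hdn, mul_pos (show (0:ℝ) < (n:ℝ) by linarith)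
      (show (0:ℝ) < (d:ℝ) by linarith)]
  -- linear independence of the coordinatized outer products
  set T := {p : Fin d × Fin d // p.1 < p.2} with hT
  set v : Fin n → ((T → 𝕜) × ℝ) :=
    fun j => (fun p => Φ p.1.1 j * star (Φ p.1.2 j), (1 : ℝ)) with hv
  have li : LinearIndependent ℝ v := by
    rw [Fintype.linearIndependent_iff]
    intro c hc
    have h2 : ∑ j, c j = 0 := by
      have := congrArg Prod.snd hc
      simpa [hv, Prod.snd_sum] using this
    have h1 : ∀ p : T, ∑ j, c j • (Φ p.1.1 j * star (Φ p.1.2 j)) = 0 := by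
      intro p
      have := congrArg (fun z : ((T → 𝕜) × ℝ) => z.1 p) hc
      simpa [hv, Prod.fst_sum, Finset.sum_apply] using this
    have hA : ∀ i i' : Fin d, ∑ j, c j • (Φ i j * star (Φ i' j)) = 0 := by
      intro i i'
      rcases lt_trichotomy i i' with h | h | h
      · exact h1 ⟨(i, i'), h⟩
      · subst h
        rw [Finset.sum_congr rfl fun j _ => (by rw [hunit' i j] :
          c j • (Φ i j * star (Φ i j)) = c j • (1 : 𝕜))]
        rw [← Finset.sum_smul, h2, zero_smul]
      · have h0 := h1 ⟨(i', i), h⟩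
        have hterm : ∀ j, c j • (Φ i j * star (Φ i' j))
            = star (c j • (Φ i' j * star (Φ i j))) := by
          intro j
          simp only [RCLike.real_smul_eq_coe_mul, RCLike.star_def, _root_.map_mul,
            RCLike.conj_ofReal, RCLike.conj_conj]
          ring
        rw [Finset.sum_congr rfl fun j _ => hterm j, ← star_sum, h0, star_zero]
    intro k
    have e1 : ∀ j, g k j * star (g k j)
        = ∑ i, ∑ i', (star (Φ i k) * Φ i j) * (Φ i' k * star (Φ i' j)) := by
      intro j
      rw [hgstar, hge, Finset.sum_mul_sum]
    have e2 : ∑ j, c j • (g k j * star (g k j)) = 0 := by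
      have : ∑ j, c j • (g k j * star (g k j))
          = ∑ i, ∑ i', (star (Φ i k) * Φ i' k) * (∑ j, c j • (Φ i j * star (Φ i' j))) := by
        simp_rw [e1, Finset.smul_sum]
        rw [Finset.sum_comm]
        refine Finset.sum_congr rfl fun i _ => ?_
        rw [Finset.sum_comm]
        refine Finset.sum_congr rfl fun i' _ => ?_
        rw [Finset.mul_sum]
        refine Finset.sum_congr rfl fun j _ => ?_
        rw [mul_smul_comm]
        congr 1
        ring
      rw [this]
      exact Finset.sum_eq_zero fun i _ => Finset.sum_eq_zero fun i' _ => by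
        rw [hA i i', mul_zero]
    have e3 : ((∑ j, c j * ‖g k j‖^2 : ℝ) : 𝕜) = 0 := by
      rw [RCLike.ofReal_sum, ← e2]
      refine Finset.sum_congr rfl fun j _ => ?_
      simp only [RCLike.star_def]
      rw [RCLike.mul_conj, RCLike.real_smul_eq_coe_mul, ← RCLike.ofReal_pow,
        ← RCLike.ofReal_mul]
    have e3' : ∑ j, c j * ‖g k j‖^2 = 0 := by exact_mod_cast e3
    have e4 : ∑ j, c j * ‖g k j‖^2
        = c k * ((d:ℝ)^2 - γ^2) + γ^2 * (∑ j, c j) := by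
      rw [← Finset.sum_erase_add Finset.univ _ (Finset.mem_univ k),
        ← Finset.sum_erase_add Finset.univ c (Finset.mem_univ k)]
      have hterm : ∀ j ∈ Finset.univ.erase k, c j * ‖g k j‖^2 = γ^2 * c j := by
        intro j hj
        have hjk : k ≠ j := fun h => (Finset.mem_erase.mp hj).1 h.symm
        rw [← hγ k j hjk, ← hge]
        ring
      rw [Finset.sum_congr rfl hterm, ← Finset.mul_sum, hgdiag, RCLike.norm_natCast]
      ring
    rw [e4, h2, mul_zero, add_zero] at e3'
    have hne : (d:ℝ)^2 - γ^2 ≠ 0 := by linarith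
    exact (mul_eq_zero.mp e3').resolve_right hne
  have hcard := li.fintype_card_le_finrank
  rw [Fintype.card_fin] at hcard
  have hfr : Module.finrank ℝ ((T → 𝕜) × ℝ) = Module.finrank ℝ 𝕜 * d.choose 2 + 1 := by
    rw [Module.finrank_prod, Module.finrank_self, Module.finrank_pi_fintype,
      Finset.sum_const, Finset.card_univ]
    have hcT : Fintype.card T = d.choose 2 := card_upper d
    rw [hcT, smul_eq_mul, mul_comm]
  rw [hfr] at hcard
  exact hcard

lemma naimark_card_le (d n : ℕ) (hd : 2 ≤ d) (hn : d + 2 ≤ n)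
    (Φ : Matrix (Fin d) (Fin n) 𝕜)
    (γ : ℝ) (hγ : ∀ j j', j ≠ j' → ‖∑ i, star (Φ i j) * Φ i j'‖ = γ)
    (H : Matrix (Fin n) (Fin n) 𝕜) (f : Fin d → Fin n)
    (hHflat : ∀ i j, ‖H i j‖ = 1) (hH : H * H.conjTranspose = (n : 𝕜) • 1)
    (hf : Function.Injective f) (hΦH : ∀ i j, Φ i j = H (f i) j) :
    n ≤ Module.finrank ℝ 𝕜 * (n - d).choose 2 + 1 := by
  classical
  have hne : ((n : ℕ) : 𝕜) ≠ 0 := Nat.cast_ne_zero.mpr (by omega)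
  set s : Finset (Fin n) := Finset.univ \ Finset.image f Finset.univ with hs
  have hcard : s.card = n - d := by
    rw [hs, Finset.card_sdiff_of_subset (Finset.subset_univ _),
      Finset.card_image_of_injective _ hf, Finset.card_univ, Fintype.card_fin,
      Finset.card_univ, Fintype.card_fin]
  set ee : Fin (n - d) ≃ {x // x ∈ s} := (finCongr hcard.symm).trans s.equivFin.symm
    with hee
  set Ψ : Matrix (Fin (n - d)) (Fin n) 𝕜 := fun i j => H ((ee i : Fin n)) j with hΨ
  -- columns of H are orthogonal
  have hinv : H * ((n : 𝕜)⁻¹ • H.conjTranspose) = 1 := by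
    rw [Matrix.mul_smul, hH, smul_smul, inv_mul_cancel₀ hne, one_smul]
  have hinv' := mul_eq_one_comm.mp hinv
  have hHcol : H.conjTranspose * H = (n : 𝕜) • 1 := by
    have h := congrArg (fun M => (n : 𝕜) • M) hinv'
    simpa [Matrix.smul_mul, smul_smul, mul_inv_cancel₀ hne] using h
  have hcol : ∀ j j', ∑ i, star (H i j) * H i j'
      = if j = j' then (n : 𝕜) else 0 := by
    intro j j'
    have h := congrFun (congrFun hHcol j) j'
    have h1 : (H.conjTranspose * H) j j' = ∑ i, star (H i j) * H i j' := by
      simp [Matrix.mul_apply, Matrix.conjTranspose_apply]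
    have h2 : ((n : 𝕜) • (1 : Matrix (Fin n) (Fin n) 𝕜)) j j'
        = if j = j' then (n : 𝕜) else 0 := by
      by_cases hjj : j = j' <;> simp [Matrix.smul_apply, Matrix.one_apply, hjj]
    rw [h1, h2] at h
    simpa [RCLike.star_def] using h
  -- splitting a sum over Fin n
  have hsplit : ∀ F : Fin n → 𝕜,
      ∑ i, F i = (∑ i : Fin (n - d), F (ee i : Fin n)) + ∑ i : Fin d, F (f i) := by
    intro F
    have h1 : ∑ i ∈ Finset.image f Finset.univ, F i = ∑ i : Fin d, F (f i) :=
      Finset.sum_image (fun a _ b _ h => hf h)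
    have h2 : ∑ i ∈ s, F i = ∑ i : Fin (n - d), F (ee i : Fin n) := by
      rw [← Finset.sum_coe_sort s F, ← Equiv.sum_comp ee (fun x : {x // x ∈ s} => F x)]
    have h3 := Finset.sum_sdiff (f := F) (Finset.subset_univ (Finset.image f Finset.univ))
    rw [← h3, h1, ← hs, h2]
  -- Ψ is flat
  have hΨflat : ∀ i j, ‖Ψ i j‖ = 1 := fun i j => hHflat _ j
  -- Ψ has orthogonal rows
  have hΨrows : Ψ * Ψ.conjTranspose = (((n : ℝ) : 𝕜)) • 1 := by
    ext i i'
    have h1 : (Ψ * Ψ.conjTranspose) i i'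
        = ∑ j, H (ee i : Fin n) j * star (H (ee i' : Fin n) j) := by
      simp only [Matrix.mul_apply, Matrix.conjTranspose_apply]; simp [hΨ]
    have h2 : ∑ j, H (ee i : Fin n) j * star (H (ee i' : Fin n) j)
        = if (ee i : Fin n) = (ee i' : Fin n) then (n : 𝕜) else 0 := by
      have := congrFun (congrFun hH (ee i : Fin n)) (ee i' : Fin n)
      have h3 : (H * H.conjTranspose) (ee i : Fin n) (ee i' : Fin n)
          = ∑ j, H (ee i : Fin n) j * star (H (ee i' : Fin n) j) := by
        simp [Matrix.mul_apply, Matrix.conjTranspose_apply]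
      have h4 : ((n : 𝕜) • (1 : Matrix (Fin n) (Fin n) 𝕜)) (ee i : Fin n) (ee i' : Fin n)
          = if (ee i : Fin n) = (ee i' : Fin n) then (n : 𝕜) else 0 := by
        by_cases hjj : (ee i : Fin n) = (ee i' : Fin n) <;>
          simp [Matrix.smul_apply, Matrix.one_apply, hjj]
      rw [h3, h4] at this
      simpa [RCLike.star_def] using this
    have h5 : ((ee i : Fin n) = (ee i' : Fin n)) ↔ i = i' := by
      constructor
      · intro h
        exact ee.injective (Subtype.coe_injective h)
      · intro h; rw [h]
    rw [h1, h2]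
    by_cases hii : i = i'
    · simp [hii, Matrix.smul_apply, Matrix.one_apply]
    · rw [if_neg (fun h => hii (h5.mp h))]
      simp [Matrix.smul_apply, Matrix.one_apply, hii]
  -- Ψ is equiangular with the same γ
  have hΨγ : ∀ j j', j ≠ j' → ‖∑ i, star (Ψ i j) * Ψ i j'‖ = γ := by
    intro j j' hjj
    have h := hsplit (fun i => star (H i j) * H i j')
    rw [hcol j j', if_neg hjj] at h
    have h6 : ∑ i : Fin d, star (H (f i) j) * H (f i) j'
        = ∑ i : Fin d, star (Φ i j) * Φ i j' := by
      refine Finset.sum_congr rfl fun i _ => ?_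
      rw [hΦH, hΦH]
    have h7 : ∑ i, star (Ψ i j) * Ψ i j' = - ∑ i : Fin d, star (Φ i j) * Φ i j' := by
      have : (0 : 𝕜) = (∑ i, star (Ψ i j) * Ψ i j') + ∑ i : Fin d, star (Φ i j) * Φ i j' := by
        rw [← h6]
        exact h
      linear_combination -this
    rw [h7, norm_neg]
    exact hγ j j' hjj
  exact etf_card_le (n - d) n (by omega) (by omega) Ψ hΨflat (n : ℝ)
    (by rw [hΨrows]) γ hΨγ

lemma arith1 (d : ℕ) (hd : 1 ≤ d) : 2 * d.choose 2 + 1 = d ^ 2 - d + 1 := by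
  obtain ⟨k, rfl⟩ := Nat.exists_eq_add_of_le hd
  have h1 : (1 + k).choose 2 = (1 + k) * (1 + k - 1) / 2 := Nat.choose_two_right _
  have h2 : (1 + k) * (1 + k - 1) = k * (k + 1) := by
    have : 1 + k - 1 = k := by omega
    rw [this]; ring
  have h3 : Even (k * (k + 1)) := Nat.even_mul_succ_self k
  have h4 : 2 * (k * (k + 1) / 2) = k * (k + 1) := by
    obtain ⟨m, hm⟩ := h3
    omega
  have h5 : (1 + k) ^ 2 = k * (k + 1) + (1 + k) := by ring
  omega



/-- **Gerzon-type bounds for flat and Hadamard ETFs.**  If `{φ_j}` is a flat ETF for `F^d`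
with `1 < d < n − 1`, then `n ≤ d² − d + 1` when `F = ℂ` and `n ≤ d(d−1)/2 + 1` when
`F = ℝ`.  If moreover the ETF is (complex) Hadamard, then also
`n ≤ (n−d)² − (n−d) + 1`, i.e. `d + √d + 1 ≤ n` (complex case), and
`n ≤ (n−d)(n−d−1)/2 + 1`, i.e. `d + √(2d + 1/4) + 3/2 ≤ n` (real case). -/
theorem flat_etf_bounds :
    (∀ (d n : ℕ), 1 < d → d < n - 1 →
      ∀ Φ : Matrix (Fin d) (Fin n) ℂ,
        (∀ i j, ‖Φ i j‖ = 1) →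
        (∃ α : ℝ, 0 < α ∧ Φ * Φ.conjTranspose = (α : ℂ) • 1) →
        (∃ γ : ℝ, ∀ j j', j ≠ j' → ‖∑ i, (starRingEnd ℂ) (Φ i j) * Φ i j'‖ = γ) →
        n ≤ d ^ 2 - d + 1) ∧
    (∀ (d n : ℕ), 1 < d → d < n - 1 →
      ∀ Φ : Matrix (Fin d) (Fin n) ℝ,
        (∀ i j, Φ i j = 1 ∨ Φ i j = -1) →
        (∃ α : ℝ, 0 < α ∧ Φ * Φ.transpose = α • 1) →
        (∃ γ : ℝ, ∀ j j', j ≠ j' → |∑ i, Φ i j * Φ i j'| = γ) →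
        n ≤ d * (d - 1) / 2 + 1) ∧
    (∀ (d n : ℕ), 1 < d → d < n - 1 →
      ∀ Φ : Matrix (Fin d) (Fin n) ℂ,
        (∀ i j, ‖Φ i j‖ = 1) →
        (∃ α : ℝ, 0 < α ∧ Φ * Φ.conjTranspose = (α : ℂ) • 1) →
        (∃ γ : ℝ, ∀ j j', j ≠ j' → ‖∑ i, (starRingEnd ℂ) (Φ i j) * Φ i j'‖ = γ) →
        (∃ (H : Matrix (Fin n) (Fin n) ℂ) (f : Fin d → Fin n),
          (∀ i j, ‖H i j‖ = 1) ∧ H * H.conjTranspose = (n : ℂ) • 1 ∧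
          Function.Injective f ∧ (∀ i j, Φ i j = H (f i) j)) →
        n ≤ (n - d) ^ 2 - (n - d) + 1 ∧ (d : ℝ) + Real.sqrt d + 1 ≤ n) ∧
    (∀ (d n : ℕ), 1 < d → d < n - 1 →
      ∀ Φ : Matrix (Fin d) (Fin n) ℝ,
        (∀ i j, Φ i j = 1 ∨ Φ i j = -1) →
        (∃ α : ℝ, 0 < α ∧ Φ * Φ.transpose = α • 1) →
        (∃ γ : ℝ, ∀ j j', j ≠ j' → |∑ i, Φ i j * Φ i j'| = γ) →
        (∃ (H : Matrix (Fin n) (Fin n) ℝ) (f : Fin d → Fin n),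
          (∀ i j, H i j = 1 ∨ H i j = -1) ∧ H * H.transpose = (n : ℝ) • 1 ∧
          Function.Injective f ∧ (∀ i j, Φ i j = H (f i) j)) →
        n ≤ (n - d) * (n - d - 1) / 2 + 1 ∧
          (d : ℝ) + Real.sqrt (2 * d + 1 / 4) + 3 / 2 ≤ n) := by
  have transRe : ∀ {a b : ℕ} (M : Matrix (Fin a) (Fin b) ℝ),
      M.conjTranspose = M.transpose := by
    intro a b M
    ext i j
    simp [Matrix.conjTranspose_apply, Matrix.transpose_apply]
  refine ⟨?_, ?_, ?_, ?_⟩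
  · -- complex flat ETF bound
    intro d n hd hn Φ hflat ⟨α, hα, hΦ⟩ ⟨γ, hγ⟩
    have hd2 : 2 ≤ d := hd
    have hn2 : d + 2 ≤ n := by omega
    have hb := etf_card_le d n hd2 hn2 Φ hflat α hΦ γ (by
      intro j j' hjj
      simpa [RCLike.star_def] using hγ j j' hjj)
    rwa [Complex.finrank_real_complex, arith1 d (by omega)] at hb
  · -- real flat ETF bound
    intro d n hd hn Φ hpm ⟨α, hα, hΦ⟩ ⟨γ, hγ⟩
    have hflat : ∀ i j, ‖Φ i j‖ = 1 := by
      intro i j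
      rcases hpm i j with h | h <;> simp [h]
    have hb := etf_card_le d n hd (by omega) Φ hflat α
      (by rw [transRe Φ]; exact_mod_cast hΦ) γ (by
        intro j j' hjj
        simpa [Real.norm_eq_abs] using hγ j j' hjj)
    rwa [Module.finrank_self, one_mul, Nat.choose_two_right] at hb
  · -- complex Hadamard ETF bound
    intro d n hd hn Φ hflat _ ⟨γ, hγ⟩ ⟨H, f, hHflat, hH, hf, hΦH⟩
    have hn2 : d + 2 ≤ n := by omega
    have hb := naimark_card_le d n hd hn2 Φ γ (by
        intro j j' hjj
        simpa [RCLike.star_def] using hγ j j' hjj) H f hHflat hH hf hΦH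
    rw [Complex.finrank_real_complex, arith1 (n - d) (by omega)] at hb
    refine ⟨hb, ?_⟩
    set e := n - d with hedef
    have he2 : 2 ≤ e := by omega
    have hde : d + e = n := by omega
    have hee : e ≤ e ^ 2 := Nat.le_self_pow (by norm_num) e
    have h7 : d + 2 * e ≤ e ^ 2 + 1 := by omega
    have h7' : (d : ℝ) ≤ ((e : ℝ) - 1) ^ 2 := by
      have : (d : ℝ) + 2 * e ≤ (e : ℝ) ^ 2 + 1 := by exact_mod_cast h7
      nlinarith
    have h8 : Real.sqrt d ≤ (e : ℝ) - 1 := by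
      have h9 := Real.sqrt_le_sqrt h7'
      rwa [Real.sqrt_sq (by
        have : (2 : ℝ) ≤ (e : ℝ) := by exact_mod_cast he2
        linarith)] at h9
    have h10 : (d : ℝ) + e = n := by exact_mod_cast hde
    linarith
  · -- real Hadamard ETF bound
    intro d n hd hn Φ hpm _ ⟨γ, hγ⟩ ⟨H, f, hHpm, hH, hf, hΦH⟩
    have hn2 : d + 2 ≤ n := by omega
    have hHflat : ∀ i j, ‖H i j‖ = 1 := by
      intro i j
      rcases hHpm i j with h | h <;> simp [h]
    have hb := naimark_card_le d n hd hn2 Φ γ (by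
        intro j j' hjj
        simpa [Real.norm_eq_abs] using hγ j j' hjj) H f hHflat
      (by rw [transRe H]; exact_mod_cast hH) hf hΦH
    rw [Module.finrank_self, one_mul, Nat.choose_two_right] at hb
    refine ⟨hb, ?_⟩
    set e := n - d with hedef
    have he2 : 2 ≤ e := by omega
    have hde : d + e = n := by omega
    have hdiv : 2 * (e * (e - 1) / 2) ≤ e * (e - 1) := by
      have := Nat.div_mul_le_self (e * (e - 1)) 2
      omega
    have h7 : 2 * d + 3 * e ≤ e * (e - 1) + 2 + e := by omega
    have h7' : (2 : ℝ) * d + 1 / 4 ≤ ((e : ℝ) - 3 / 2) ^ 2 := by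
      have he' : ((e : ℝ) - 1) * e = (e * (e - 1) : ℕ) := by
        push_cast [Nat.cast_sub (by omega : 1 ≤ e)]
        ring
      have : (2 : ℝ) * d + 3 * e ≤ (e * (e - 1) : ℕ) + 2 + e := by exact_mod_cast h7
      rw [← he'] at this
      nlinarith
    have h8 : Real.sqrt (2 * d + 1 / 4) ≤ (e : ℝ) - 3 / 2 := by
      have h9 := Real.sqrt_le_sqrt h7'
      rwa [Real.sqrt_sq (by
        have : (2 : ℝ) ≤ (e : ℝ) := by exact_mod_cast he2
        linarith)] at h9
    have h10 : (d : ℝ) + e = n := by exact_mod_cast hde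
    linarith
end
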